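/- For odd k ≥ 3, letting M_k = 2^{k-1} + 2^{k-3} + ... + 1 and V_k = ∑_{i,j=1}^{M_k} C_k(i,j) (the variance under covariance C_k of the sum of the first M_k coordinates), one has V_k ≥ V_{k-2} + 2/3, where V_{k-2} is the analogous quantity for C_{k-2}. -/

import Mathlib

open Matrix

/-- All-ones matrix of size `2^k × 2^k`. -/
def Jmat (k : ℕ) : Matrix (Fin (2^k)) (Fin (2^k)) ℝ := Matrix.of fun _ _ => 1

/-- The recursively defined correlation matrices: `Cmat 1 = [[1,-1/2],[-1/2,1]]` and
`Cmat (k+1) = [[Cmat k, -J_k/2^(2k+1)], [-J_k/2^(2k+1), Cmat k]]`.  (`Cmat 0` is the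
`1×1` matrix `[1]`, which makes the recursion start correctly at `k = 1`.) -/
noncomputable def Cmat : (k : ℕ) → Matrix (Fin (2^k)) (Fin (2^k)) ℝ
  | 0 => Matrix.of fun _ _ => 1
  | (k+1) =>
      Matrix.reindex (finSumFinEquiv.trans (finCongr (by ring : 2^k + 2^k = 2^(k+1)))) (finSumFinEquiv.trans (finCongr (by ring : 2^k + 2^k = 2^(k+1))))
        (Matrix.fromBlocks (Cmat k) (-((1:ℝ)/2^(2*k+1)) • Jmat k)
          (-((1:ℝ)/2^(2*k+1)) • Jmat k) (Cmat k))

/-- `M k = 2^(k-1) + 2^(k-3) + ... + 1` for odd `k`. -/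
def Mnum (k : ℕ) : ℕ := ∑ i ∈ Finset.range ((k - 1) / 2 + 1), 2^(2*i)

/-- `V k`: the variance (under covariance `C_k`) of the sum of the first `M k`
coordinates, i.e. `∑_{i,j < M k} C_k(i,j)`. -/
noncomputable def Vnum (k : ℕ) : ℝ :=
  ∑ i : Fin (2^k), ∑ j : Fin (2^k),
    if (i : ℕ) < Mnum k ∧ (j : ℕ) < Mnum k then Cmat k i j else 0

/-- For odd `k ≥ 3`, `V_k ≥ V_{k-2} + 2/3`. -/
lemma Cmat_block_sum (k : ℕ) (G : ℕ → ℕ → ℝ → ℝ) :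
    ∑ i : Fin (2^(k+1)), ∑ j : Fin (2^(k+1)), G i j (Cmat (k+1) i j)
    = ((∑ a : Fin (2^k), ∑ b : Fin (2^k), G a b (Cmat k a b))
      + (∑ a : Fin (2^k), ∑ b : Fin (2^k), G a (2^k + b) (-((1:ℝ)/2^(2*k+1)))))
      + ((∑ a : Fin (2^k), ∑ b : Fin (2^k), G (2^k + a) b (-((1:ℝ)/2^(2*k+1))))
      + (∑ a : Fin (2^k), ∑ b : Fin (2^k), G (2^k + a) (2^k + b) (Cmat k a b))) := by
  set e : (Fin (2^k) ⊕ Fin (2^k)) ≃ Fin (2^(k+1)) :=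
    finSumFinEquiv.trans (finCongr (by ring : 2^k + 2^k = 2^(k+1))) with he
  have key : ∀ (f : Fin (2^(k+1)) → ℝ), ∑ i, f i = ∑ p : Fin (2^k) ⊕ Fin (2^k), f (e p) :=
    fun f => (Fintype.sum_equiv e _ f (fun p => rfl)).symm
  have step : ∑ i : Fin (2^(k+1)), ∑ j : Fin (2^(k+1)), G i j (Cmat (k+1) i j)
      = ∑ p : Fin (2^k) ⊕ Fin (2^k), ∑ q : Fin (2^k) ⊕ Fin (2^k),
          G (e p) (e q) (Cmat (k+1) (e p) (e q)) := by
    rw [key]; exact Finset.sum_congr rfl fun p _ => key _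
  rw [step]
  have happ : ∀ p q, Cmat (k+1) (e p) (e q) =
      Matrix.fromBlocks (Cmat k) (-((1:ℝ)/2^(2*k+1)) • Jmat k)
        (-((1:ℝ)/2^(2*k+1)) • Jmat k) (Cmat k) p q := by
    intro p q; rw [Cmat]; simp [he]
  have hval₁ : ∀ a : Fin (2^k), ((e (Sum.inl a) : Fin (2^(k+1))) : ℕ) = a := by
    intro a; simp [he]
  have hval₂ : ∀ a : Fin (2^k), ((e (Sum.inr a) : Fin (2^(k+1))) : ℕ) = 2^k + a := by
    intro a; simp [he]; omega
  simp only [happ, hval₁, hval₂, Fintype.sum_sum_type, Matrix.fromBlocks_apply₁₁,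
    Matrix.fromBlocks_apply₁₂, Matrix.fromBlocks_apply₂₁, Matrix.fromBlocks_apply₂₂,
    Matrix.smul_apply, Jmat, Matrix.of_apply, smul_eq_mul, mul_one,
    Finset.sum_add_distrib]
  ring

noncomputable def Vgen (k m : ℕ) : ℝ :=
  ∑ i : Fin (2^k), ∑ j : Fin (2^k),
    if (i : ℕ) < m ∧ (j : ℕ) < m then Cmat k i j else 0

lemma Vnum_eq (k : ℕ) : Vnum k = Vgen k (Mnum k) := rfl

lemma pow_id (k : ℕ) : (2:ℝ)^(2*k+1) = 2^k * 2^k * 2 := by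
  rw [pow_add, two_mul, pow_add]; ring

lemma Cmat_total_sum (k : ℕ) : ∑ i : Fin (2^k), ∑ j : Fin (2^k), Cmat k i j = 1 := by
  induction k with
  | zero => simp [Cmat]
  | succ k ih =>
    have := Cmat_block_sum k (fun _ _ x => x)
    rw [this, ih]
    simp only [Finset.sum_const, Finset.card_univ, Fintype.card_fin, nsmul_eq_mul]
    rw [pow_id]
    push_cast
    field_simp
    ring

lemma sum_if_lt (n m : ℕ) (hm : m ≤ n) (c : ℝ) :
    (∑ b : Fin n, if (b:ℕ) < m then c else 0) = m * c := by
  rw [Fin.sum_univ_eq_sum_range (fun i => if i < m then c else 0)]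
  have h : ∀ i, (if i < m then c else 0) = if i ∈ Finset.range m then c else 0 := by
    intro i; simp
  simp_rw [h]
  rw [Finset.sum_ite_mem, Finset.inter_eq_right.mpr (Finset.range_subset_range.mpr hm),
    Finset.sum_const, Finset.card_range, nsmul_eq_mul]

lemma sum_if_lt₂ (n m : ℕ) (hm : m ≤ n) (c : ℝ) :
    (∑ a : Fin n, ∑ _b : Fin n, if (a:ℕ) < m then c else 0) = n * (m * c) := by
  rw [Finset.sum_comm]
  simp_rw [sum_if_lt n m hm c]
  simp [Finset.sum_const, mul_comm]

lemma sum_if_lt₁ (n m : ℕ) (hm : m ≤ n) (c : ℝ) :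
    (∑ _a : Fin n, ∑ b : Fin n, if (b:ℕ) < m then c else 0) = n * (m * c) := by
  simp_rw [sum_if_lt n m hm c]
  simp [Finset.sum_const, mul_comm]

lemma Vgen_succ_low (k m : ℕ) (hm : m ≤ 2^k) : Vgen (k+1) m = Vgen k m := by
  have := Cmat_block_sum k (fun i j x => if i < m ∧ j < m then x else 0)
  rw [Vgen, this, Vgen]
  have h1 : ∀ a : Fin (2^k), ¬ (2^k + (a:ℕ) < m) := by intro a; omega
  simp [h1]

lemma Vgen_succ_high (k m : ℕ) (hm : m ≤ 2^k) :
    Vgen (k+1) (2^k + m) = 1 - m / 2^k + Vgen k m := by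
  have := Cmat_block_sum k (fun i j x => if i < 2^k + m ∧ j < 2^k + m then x else 0)
  rw [Vgen, this]
  have h1 : ∀ a : Fin (2^k), ((a:ℕ) < 2^k + m) := by intro a; have := a.isLt; omega
  have h2 : ∀ a : Fin (2^k), (2^k + (a:ℕ) < 2^k + m) ↔ ((a:ℕ) < m) := by intro a; omega
  simp only [h1, h2, true_and, and_true, if_true]
  rw [Cmat_total_sum, sum_if_lt₁ _ _ hm, sum_if_lt₂ _ _ hm]
  rw [show (∑ a : Fin (2^k), ∑ b : Fin (2^k), if (a:ℕ) < m ∧ (b:ℕ) < m then Cmat k a b else 0)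
      = Vgen k m from rfl]
  rw [pow_id]
  push_cast
  have h2k : (0:ℝ) < 2^k := by positivity
  field_simp
  ring

lemma geom_aux (t : ℕ) : 3 * (∑ i ∈ Finset.range t, 2^(2*i)) + 1 = 2^(2*t) := by
  induction t with
  | zero => simp
  | succ t ih =>
    rw [Finset.sum_range_succ]
    have : 2^(2*(t+1)) = 4 * 2^(2*t) := by rw [mul_add]; rw [pow_add]; ring
    omega

lemma Mnum_eq (n : ℕ) (hn : Odd n) : 3 * Mnum n + 1 = 2^(n+1) := by
  obtain ⟨s, hs⟩ := hn
  rw [Mnum]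
  have h : (n-1)/2 = s := by omega
  rw [h, geom_aux]
  congr 1
  omega

lemma Mnum_succ (n : ℕ) (hn : Odd n) : Mnum (n+2) = 2^(n+1) + Mnum n := by
  obtain ⟨s, hs⟩ := hn
  rw [Mnum, Mnum]
  have h1 : (n+2-1)/2 = s+1 := by omega
  have h2 : (n-1)/2 = s := by omega
  rw [h1, h2, Finset.sum_range_succ]
  have : 2*(s+1) = n+1 := by omega
  rw [this]
  ring

lemma main_aux (n : ℕ) (hn : Odd n) : Vnum n + 2/3 ≤ Vnum (n+2) := by
  have hM := Mnum_eq n hn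
  have hpos : 1 ≤ 2^n := Nat.one_le_two_pow
  have hle : Mnum n ≤ 2^n := by
    have h2 : 2^(n+1) = 2 * 2^n := by ring
    omega
  have hle' : Mnum n ≤ 2^(n+1) := le_trans hle (by omega)
  rw [Vnum_eq, Vnum_eq, Mnum_succ n hn, Vgen_succ_high (n+1) (Mnum n) hle',
    Vgen_succ_low n (Mnum n) hle]
  have hdiv : (Mnum n : ℝ) / 2^(n+1) ≤ 1/3 := by
    rw [div_le_iff₀ (by positivity)]
    have : (3:ℝ) * Mnum n + 1 = 2^(n+1) := by exact_mod_cast congrArg (Nat.cast : ℕ → ℝ) hM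
    nlinarith
  linarith

theorem Vnum_recursive_lower_bound (k : ℕ) (hk : Odd k) (hk3 : 3 ≤ k) :
    Vnum (k - 2) + 2/3 ≤ Vnum k := by
  obtain ⟨t, ht⟩ := hk
  have hn : Odd (k - 2) := ⟨t - 1, by omega⟩
  have hk2 : k - 2 + 2 = k := by omega
  have := main_aux (k - 2) hn
  rwa [hk2] at this
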